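/- arXiv:1209.4283 — 4 statements merged into one kernel-verified Lean document; each statement's English description precedes it below -/
import Mathlib

section
/- Let n be an odd positive integer, ζ = e^{2πi/n}, and A, B nonzero integers. Then the sum over j with gcd(n,A) | j, 1 ≤ j ≤ (n-1)/2, and t with gcd(n,A) | t, 1 ≤ t ≤ n, of ζ^{-Bjt/(2A)} equals (n / (2·gcd(n,A))) · (gcd(n/gcd(n,A), B) - 1). -/
private lemma filter_dvd_eq_image (d : ℕ) (hd1 : 0 < d) (N : ℕ) :
    (Finset.Icc 1 N).filter (fun j => d ∣ j) = (Finset.Icc 1 (N/d)).image (fun u => d * u) := by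
  ext j
  simp only [Finset.mem_filter, Finset.mem_image, Finset.mem_Icc]
  constructor
  · rintro ⟨⟨h1, h2⟩, k, rfl⟩
    refine ⟨k, ⟨?_, (Nat.le_div_iff_mul_le hd1).mpr (by rw [Nat.mul_comm]; exact h2)⟩, rfl⟩
    rcases Nat.eq_zero_or_pos k with h | h
    · subst h; simp at h1
    · exact h
  · rintro ⟨k, ⟨hk1, hk2⟩, rfl⟩
    have h2 := (Nat.le_div_iff_mul_le hd1).mp hk2
    exact ⟨⟨Nat.one_le_iff_ne_zero.mpr (Nat.mul_ne_zero (by omega) (by omega)),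
      by rw [Nat.mul_comm] at h2; exact h2⟩, ⟨k, rfl⟩⟩

private lemma odd_div_trick (a b : ℕ) (ha : Odd a) (hb : Odd b) :
    (a * b - 1) / 2 / a = (b - 1) / 2 := by
  obtain ⟨x, hx⟩ := ha; obtain ⟨y, hy⟩ := hb
  subst hx; subst hy
  rw [Nat.div_div_eq_div_mul]
  have h1 : (2*x+1) * (2*y+1) - 1 = (2*(2*x+1)) * y + 2*x := by ring_nf; omega
  rw [h1, Nat.mul_add_div (by omega), Nat.mul_comm 2 (2*x+1), Nat.div_eq_of_lt (by omega)]
  omega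

private lemma odd_of_dvd {a m : ℕ} (h : a ∣ m) (hm : Odd m) : Odd a := by
  obtain ⟨k, hk⟩ := h
  subst hk
  exact (Nat.odd_mul.mp hm).1

/-- Let `n` be an odd positive integer, `ζ = e^{2πi/n}`, and `A, B` nonzero integers, and
`d = gcd(n, A)`. Then the sum over `j` with `d ∣ j`, `1 ≤ j ≤ (n-1)/2`, and `t` with
`d ∣ t`, `1 ≤ t ≤ n`, of `ζ^{-Bjt/(2A)}` equals `(n / (2d)) · (gcd(n/d, B) - 1)`.
The exponent `-Bjt/(2A)` is understood as `-B·(j/d)·t·(2A/d)⁻¹` computed in `ZMod n`. -/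
theorem stmt1 (n : ℕ) (hn : Odd n) (hpos : 0 < n) (A B : ℤ) (hA : A ≠ 0) (hB : B ≠ 0)
    (d : ℕ) (hd : d = Int.gcd (n : ℤ) A) :
    ∑ j ∈ (Finset.Icc 1 ((n - 1) / 2)).filter (fun j => d ∣ j),
      ∑ t ∈ (Finset.Icc 1 n).filter (fun t => d ∣ t),
        Complex.exp (2 * Real.pi * Complex.I / n) ^
          (((((-B) * ((j / d : ℕ) : ℤ) * (t : ℤ) : ℤ) : ZMod n) *
            (((2 * A / (d : ℤ) : ℤ)) : ZMod n)⁻¹).val) =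
      ((n : ℂ) / (2 * (d : ℂ))) * ((Int.gcd ((n : ℤ) / (d : ℤ)) B : ℂ) - 1) := by
  haveI : NeZero n := ⟨hpos.ne'⟩
  set ζ : ℂ := Complex.exp (2 * Real.pi * Complex.I / n) with hζdef
  have hζ : IsPrimitiveRoot ζ n := Complex.isPrimitiveRoot_exp n hpos.ne'
  have hζ0 : ζ ≠ 0 := Complex.exp_ne_zero _
  have hζn1 : ζ ^ (n : ℤ) = 1 := by rw [zpow_natCast, hζ.pow_eq_one]
  -- modular invariance of powers of ζ
  have hzmod : ∀ a b : ℤ, (n:ℤ) ∣ a - b → ζ ^ a = ζ ^ b := by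
    rintro a b ⟨k, hk⟩
    have ha : a = b + (n:ℤ) * k := by linarith
    rw [ha, zpow_add₀ hζ0, zpow_mul, hζn1, one_zpow, mul_one]
  -- basic arithmetic setup
  have hd1 : 0 < d := by
    rw [hd]; exact Int.gcd_pos_of_ne_zero_right _ hA
  have hdnZ : (d:ℤ) ∣ (n:ℤ) := hd ▸ Int.gcd_dvd_left _ _
  have hdAZ : (d:ℤ) ∣ A := hd ▸ Int.gcd_dvd_right _ _
  have hdn : d ∣ n := Int.natCast_dvd_natCast.mp hdnZ
  set m : ℕ := n / d with hmdef
  have hnm : n = d * m := (Nat.mul_div_cancel' hdn).symm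
  have hm0 : 0 < m := Nat.div_pos (Nat.le_of_dvd hpos hdn) hd1
  have hdodd : Odd d := odd_of_dvd hdn hn
  have hmodd : Odd m := odd_of_dvd ⟨d, by rw [hnm]; ring⟩ hn
  have hdZ0 : (d:ℤ) ≠ 0 := by exact_mod_cast hd1.ne'
  -- the inverse element and the gcd identity
  set c : ZMod n := ((2 * A / (d : ℤ) : ℤ) : ZMod n) with hcdef
  set cv : ℕ := (c⁻¹).val with hcvdef
  have hcv : ((cv : ℕ) : ZMod n) = c⁻¹ := by
    rw [hcvdef, ZMod.natCast_val, ZMod.cast_id]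
  set g : ℕ := Nat.gcd c.val n with hgdef
  have hkey : (n:ℤ) ∣ (2 * A / d) * (cv:ℤ) - (g:ℤ) := by
    rw [← ZMod.intCast_zmod_eq_zero_iff_dvd]
    push_cast
    rw [hcv, hcdef, ZMod.mul_inv_eq_gcd, ← hgdef]
    ring
  -- coprimality of m and g
  have hcval : ((c.val : ℕ) : ℤ) = (2 * A / d) % (n:ℤ) := by
    rw [hcdef]; exact ZMod.val_intCast _
  have h2Ad : (2 * A / (d:ℤ)) = 2 * (A / (d:ℤ)) := by
    rw [Int.mul_ediv_assoc _ hdAZ]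
  have hmZ : (n:ℤ) / (d:ℤ) = (m:ℤ) := by
    rw [show ((n:ℕ):ℤ) = (d:ℤ) * (m:ℤ) by exact_mod_cast hnm]
    exact Int.mul_ediv_cancel_left _ hdZ0
  have hmAd : IsCoprime ((m:ℤ)) (A / (d:ℤ)) := by
    rw [Int.isCoprime_iff_gcd_eq_one]
    have := Int.gcd_div_gcd_div_gcd (i := (n:ℤ)) (j := A) (by rw [← hd]; exact hd1)
    rw [← hd] at this
    rw [← hmZ]
    exact this
  have hm2 : IsCoprime ((m:ℤ)) (2:ℤ) := by
    rw [Int.isCoprime_iff_gcd_eq_one]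
    have h2m : Nat.Coprime m 2 := by
      have : ¬ (2 ∣ m) := by
        intro ⟨k, hk⟩; rw [Nat.odd_iff] at hmodd; omega
      exact ((Nat.Prime.coprime_iff_not_dvd Nat.prime_two).mpr this).symm
    rw [show (2:ℤ) = ((2:ℕ):ℤ) by norm_num, Int.gcd_natCast_natCast]
    exact h2m
  have hg2Ad : (g:ℤ) ∣ 2 * A / (d:ℤ) := by
    have h1 : (g:ℤ) ∣ ((c.val : ℕ) : ℤ) := Int.natCast_dvd_natCast.mpr (Nat.gcd_dvd_left _ _)
    have h2 : (g:ℤ) ∣ (n:ℤ) := Int.natCast_dvd_natCast.mpr (Nat.gcd_dvd_right _ _)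
    have h3 : (2 * A / (d:ℤ)) = ((c.val : ℕ) : ℤ) + (n:ℤ) * (2 * A / (d:ℤ) / (n:ℤ)) := by
      rw [hcval, Int.emod_def]; ring
    rw [h3]; exact dvd_add h1 (Dvd.dvd.mul_right h2 _)
  have hmg : IsCoprime ((m:ℤ)) ((g:ℤ)) := by
    have : IsCoprime ((m:ℤ)) (2 * (A / (d:ℤ))) := hm2.mul_right hmAd
    rw [← h2Ad] at this
    exact IsCoprime.of_isCoprime_of_dvd_right this hg2Ad
  -- reindex the outer sum
  rw [filter_dvd_eq_image d hd1,
    Finset.sum_image (fun a _ b _ h => Nat.eq_of_mul_eq_mul_left hd1 h)]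
  have houter : (n-1)/2/d = (m-1)/2 := by
    rw [hnm]; exact odd_div_trick d m hdodd hmodd
  rw [houter]
  -- evaluate the inner sums
  have hinner : ∀ u ∈ Finset.Icc 1 ((m-1)/2),
      (∑ t ∈ (Finset.Icc 1 n).filter (fun t => d ∣ t),
        ζ ^ ((((-B) * ((d * u / d : ℕ) : ℤ) * (t : ℤ) : ℤ) : ZMod n) * c⁻¹).val)
      = if (m:ℤ) ∣ B * u then (m:ℂ) else 0 := by
    intro u hu
    rw [filter_dvd_eq_image d hd1,
      Finset.sum_image (fun a _ b _ h => Nat.eq_of_mul_eq_mul_left hd1 h), ← hmdef]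
    set K : ℤ := (-B) * (u:ℤ) * (d:ℤ) * (cv:ℤ) with hK
    have hterm : ∀ s : ℕ,
        ζ ^ ((((-B) * ((d * u / d : ℕ) : ℤ) * ((d * s : ℕ) : ℤ) : ℤ) : ZMod n) * c⁻¹).val
        = (ζ ^ K) ^ s := by
      intro s
      have hdu : d * u / d = u := Nat.mul_div_cancel_left u hd1
      rw [hdu]
      set X : ZMod n := (((-B) * (u:ℤ) * ((d * s : ℕ) : ℤ) : ℤ) : ZMod n) * c⁻¹ with hX
      have hX2 : X = ((K * s : ℤ) : ZMod n) := by
        rw [hX, ← hcv, hK]; push_cast; ring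
      have hXv : ((X.val : ℕ) : ℤ) = (K * s) % (n:ℤ) := by rw [hX2]; exact ZMod.val_intCast _
      calc ζ ^ X.val = ζ ^ ((X.val : ℕ) : ℤ) := (zpow_natCast ζ X.val).symm
        _ = ζ ^ (K * s) := by
              apply hzmod; rw [hXv, Int.emod_def]; exact ⟨-(K * (s:ℤ) / (n:ℤ)), by ring⟩
        _ = (ζ ^ K) ^ ((s:ℕ) : ℤ) := by rw [← zpow_mul]
        _ = (ζ ^ K) ^ s := zpow_natCast _ s
    rw [Finset.sum_congr rfl (fun s _ => hterm s)]
    set z : ℂ := ζ ^ K with hz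
    have hzm : z ^ m = 1 := by
      rw [hz, ← zpow_natCast, ← zpow_mul]
      have hdvd : (n:ℤ) ∣ K * m - 0 := ⟨(-B) * u * cv, by rw [hK]; push_cast [hnm]; ring⟩
      rw [hzmod _ 0 hdvd, zpow_zero]
    have hcond : z = 1 ↔ (m:ℤ) ∣ B * u := by
      rw [hz, hζ.zpow_eq_one_iff_dvd]
      constructor
      · intro hnK
        have h1 : (n:ℤ) ∣ B * u * (d:ℤ) * cv := by
          have h1' : (n:ℤ) ∣ -((-B) * (u:ℤ) * (d:ℤ) * (cv:ℤ)) := dvd_neg.mpr hnK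
          convert h1' using 1; ring
        have h3 : (n:ℤ) ∣ B * u * (d:ℤ) * (g:ℤ) := by
          obtain ⟨k, hk⟩ := hkey
          have h2 : (n:ℤ) ∣ (B * u * (d:ℤ) * cv) * (2 * A / (d:ℤ)) := h1.mul_right _
          have heq : B * u * (d:ℤ) * (g:ℤ)
              = (B * u * (d:ℤ) * cv) * (2 * A / (d:ℤ)) - (n:ℤ) * (B * u * d * k) := by
            have hg : (g:ℤ) = (2 * A / (d:ℤ)) * cv - (n:ℤ) * k := by linarith
            rw [hg]; ring
          rw [heq]; exact dvd_sub h2 ⟨_, rfl⟩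
        have h4 : (m:ℤ) ∣ B * u * (g:ℤ) := by
          have hn' : ((n:ℕ):ℤ) = (d:ℤ) * (m:ℤ) := by exact_mod_cast hnm
          rw [hn'] at h3
          have h5 : (d:ℤ) * (m:ℤ) ∣ (d:ℤ) * (B * u * g) := by
            convert h3 using 1; ring
          exact (mul_dvd_mul_iff_left hdZ0).mp h5
        exact hmg.dvd_of_dvd_mul_right h4
      · rintro ⟨k, hk⟩
        rw [hK]
        refine ⟨-(k * cv), ?_⟩
        rw [show ((n:ℕ):ℤ) = (d:ℤ) * (m:ℤ) by exact_mod_cast hnm]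
        linear_combination (-(d:ℤ) * (cv:ℤ)) * hk
    by_cases hP : (m:ℤ) ∣ B * u
    · rw [if_pos hP]
      have hz1 : z = 1 := hcond.mpr hP
      simp [hz1]
    · rw [if_neg hP]
      have hz1 : z ≠ 1 := fun h => hP (hcond.mp h)
      have hins : Finset.range (m+1) = insert 0 (Finset.Icc 1 m) := by
        ext x; simp [Nat.lt_succ_iff]; omega
      have h00 : (0:ℕ) ∉ Finset.Icc 1 m := by simp
      have hgeo := geom_sum_eq hz1 (m+1)
      rw [hins, Finset.sum_insert h00, pow_succ, hzm, one_mul, pow_zero,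
        div_self (sub_ne_zero.mpr hz1)] at hgeo
      linear_combination hgeo
  refine Eq.trans (Finset.sum_congr rfl hinner) ?_
  -- counting multiples
  set g' : ℕ := Int.gcd (m:ℤ) B with hg'
  have hg'm : g' ∣ m := Int.natCast_dvd_natCast.mp (hg' ▸ Int.gcd_dvd_left _ _)
  have hg'B : (g':ℤ) ∣ B := hg' ▸ Int.gcd_dvd_right _ _
  have hg'0 : 0 < g' := by rw [hg']; exact Int.gcd_pos_of_ne_zero_right _ hB
  have hg'Z0 : (g':ℤ) ≠ 0 := by exact_mod_cast hg'0.ne'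
  set e : ℕ := m / g' with he
  have hme : m = g' * e := (Nat.mul_div_cancel' hg'm).symm
  have hcoEB : IsCoprime ((e:ℤ)) (B / (g':ℤ)) := by
    rw [Int.isCoprime_iff_gcd_eq_one]
    have h := Int.gcd_div_gcd_div_gcd (i := (m:ℤ)) (j := B) (hg' ▸ hg'0)
    rw [← hg'] at h
    have heZ : (m:ℤ) / (g':ℤ) = (e:ℤ) := by
      rw [show ((m:ℕ):ℤ) = (g':ℤ) * (e:ℤ) by exact_mod_cast hme]
      exact Int.mul_ediv_cancel_left _ hg'Z0
    rw [heZ] at h; exact h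
  obtain ⟨B', hB'⟩ := hg'B
  have hBg : B / (g':ℤ) = B' := by rw [hB']; exact Int.mul_ediv_cancel_left _ hg'Z0
  rw [hBg] at hcoEB
  have hdvd_iff : ∀ u : ℕ, ((m:ℤ) ∣ B * u ↔ e ∣ u) := by
    intro u
    constructor
    · intro h
      have h1 : (g':ℤ) * (e:ℤ) ∣ (g':ℤ) * ((u:ℤ) * B') := by
        have hmc : ((m:ℕ):ℤ) = (g':ℤ) * (e:ℤ) := by exact_mod_cast hme
        rw [hmc] at h
        convert h using 1
        rw [hB']; ring
      have h2 : (e:ℤ) ∣ (u:ℤ) * B' := (mul_dvd_mul_iff_left hg'Z0).mp h1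
      exact Int.natCast_dvd_natCast.mp (hcoEB.dvd_of_dvd_mul_right h2)
    · rintro ⟨k, rfl⟩
      refine ⟨B' * k, ?_⟩
      rw [show ((m:ℕ):ℤ) = (g':ℤ) * (e:ℤ) by exact_mod_cast hme, hB']
      push_cast; ring
  have hgodd : Odd g' := odd_of_dvd hg'm hmodd
  have heodd : Odd e := odd_of_dvd ⟨g', by rw [hme]; ring⟩ hmodd
  have hcount : ((Finset.Icc 1 ((m-1)/2)).filter (fun u : ℕ => (m:ℤ) ∣ B * (u:ℤ))).card
      = (g' - 1)/2 := by
    have hfc : ((Finset.Icc 1 ((m-1)/2)).filter (fun u : ℕ => (m:ℤ) ∣ B * (u:ℤ)))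
        = ((Finset.Icc 1 ((m-1)/2)).filter (fun u => e ∣ u)) :=
      Finset.filter_congr (fun x _ => by simp only [hdvd_iff x])
    rw [hfc, show Finset.Icc 1 ((m-1)/2) = Finset.Ioc 0 ((m-1)/2) from Finset.Icc_add_one_left_eq_Ioc 0 _,
      Nat.Ioc_filter_dvd_card_eq_div]
    calc (m-1)/2/e = (e * g' - 1)/2/e := by rw [hme, Nat.mul_comm]
      _ = (g'-1)/2 := odd_div_trick e g' heodd hgodd
  rw [Finset.sum_ite, Finset.sum_const, Finset.sum_const_zero, add_zero, hcount]
  -- final numeric identity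
  rw [hmZ, ← hg']
  obtain ⟨y, hy⟩ := hgodd
  have h1 : (g' - 1)/2 = y := by omega
  have hnC : (n:ℂ) = (d:ℂ) * (m:ℂ) := by exact_mod_cast hnm
  have hdC : (d:ℂ) ≠ 0 := Nat.cast_ne_zero.mpr hd1.ne'
  have hgC : (g':ℂ) = 2 * y + 1 := by exact_mod_cast hy
  rw [h1, nsmul_eq_mul, hnC, hgC]
  field_simp
  ring
end

section
/- Let n be an odd positive integer and let p/q be a rational number in lowest terms with q odd (so that M(p/q) is a knot). The number of n-colorings of the rational (2-bridge) knot M(p/q) equals n · gcd(n, q). -/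
/-- The word `w = v^{ε₁} u^{ε₂} ⋯` of length `q - 1` appearing in the standard two-bridge
knot group presentation `⟨u, v ∣ u w = w v⟩` of the rational knot `M(p/q)`, where
`ε_i = (-1)^{⌊i·p/q⌋}`; the generator `u` is `FreeGroup.of true`, `v` is
`FreeGroup.of false`, and the `i`-th letter (1-based) is `v` for `i` odd, `u` for `i` even. -/
def bridgeWord (p q : ℤ) : FreeGroup Bool :=
  ((List.range (q.toNat - 1)).map (fun i =>
    (FreeGroup.of (decide (i % 2 = 1)) : FreeGroup Bool) ^
      (if Even (Int.fdiv (((i : ℤ) + 1) * p) q) then (1 : ℤ) else -1))).prod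

/-- The single relation `u · w · v⁻¹ · w⁻¹` of the two-bridge knot group. -/
def bridgeRel (p q : ℤ) : Set (FreeGroup Bool) :=
  {FreeGroup.of true * bridgeWord p q * (FreeGroup.of false)⁻¹ * (bridgeWord p q)⁻¹}

namespace Stmt5Aux

open DihedralGroup

lemma sr_inv {n : ℕ} (a : ZMod n) : (sr a : DihedralGroup n)⁻¹ = sr a :=
  inv_eq_of_mul_eq_one_right (sr_mul_self a)

lemma r_inv {n : ℕ} (a : ZMod n) : (r a : DihedralGroup n)⁻¹ = r (-a) :=
  inv_eq_of_mul_eq_one_right (by rw [r_mul_r, add_neg_cancel, one_def])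

/-- The assignment of generators: `u ↦ sr k`, `v ↦ sr l`. -/
def liftF (n : ℕ) (k l : ZMod n) : Bool → DihedralGroup n :=
  fun b => if b then sr k else sr l

lemma alt_prod (n : ℕ) (k l : ZMod n) : ∀ t : ℕ,
    ((List.range (2 * t)).map (fun i =>
      if i % 2 = 1 then (sr k : DihedralGroup n) else sr l)).prod
      = r ((t : ZMod n) * (k - l))
  | 0 => by simp
  | (t + 1) => by
    have h2 : 2 * (t + 1) = (2 * t + 1) + 1 := by ring
    rw [h2, List.range_succ, List.range_succ, List.map_append, List.map_append,
      List.prod_append, List.prod_append, alt_prod n k l t]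
    have e1 : ¬ ((2 * t) % 2 = 1) := by omega
    have e2 : (2 * t + 1) % 2 = 1 := by omega
    simp only [List.map_cons, List.map_nil, List.prod_cons, List.prod_nil, e1, e2,
      if_true, if_false, mul_one, r_mul_sr, sr_mul_sr]
    congr 1
    push_cast
    ring

lemma lift_word (n : ℕ) (k l : ZMod n) (p q : ℤ) (t : ℕ) (ht : q.toNat - 1 = 2 * t) :
    FreeGroup.lift (liftF n k l) (bridgeWord p q) = r ((t : ZMod n) * (k - l)) := by
  unfold bridgeWord
  rw [ht, map_list_prod, List.map_map]
  have hdo : (do let a ← List.range (2 * t); pure ((a : ℤ))) =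
      (List.range (2 * t)).map (fun a : ℕ => (a : ℤ)) := by
    show (List.range (2 * t)).flatMap (fun a : ℕ => [(a : ℤ)]) = _
    induction (List.range (2 * t)) with
    | nil => rfl
    | cons a L ih => simp [List.flatMap_cons, ih]
  rw [hdo, List.map_map]
  have hfun : ((⇑(FreeGroup.lift (liftF n k l)) ∘ fun (i : ℤ) =>
      (FreeGroup.of (decide (i % 2 = 1)) : FreeGroup Bool) ^
        (if Even (Int.fdiv (((i : ℤ) + 1) * p) q) then (1 : ℤ) else -1)) ∘ fun (a : ℕ) => (a : ℤ))
      = fun (i : ℕ) => if i % 2 = 1 then (sr k : DihedralGroup n) else sr l := by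
    funext i
    simp only [Function.comp_apply, map_zpow, FreeGroup.lift_apply_of]
    by_cases h : i % 2 = 1
    · have h2 : ((i : ℤ)) % 2 = 1 := by omega
      rw [decide_eq_true h2, if_pos h]
      split_ifs <;> simp [liftF, sr_inv]
    · have h2 : ¬ (((i : ℤ)) % 2 = 1) := by omega
      rw [decide_eq_false h2, if_neg h]
      split_ifs <;> simp [liftF, sr_inv]
  rw [hfun, alt_prod]

lemma lift_relator (n : ℕ) (k l : ZMod n) (p q : ℤ) (t : ℕ) (hqt : q = 2 * t + 1) :
    FreeGroup.lift (liftF n k l)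
      (FreeGroup.of true * bridgeWord p q * (FreeGroup.of false)⁻¹ * (bridgeWord p q)⁻¹)
      = r ((q : ZMod n) * (l - k)) := by
  have ht : q.toNat - 1 = 2 * t := by omega
  simp only [map_mul, map_inv, FreeGroup.lift_apply_of, lift_word n k l p q t ht]
  show (sr k : DihedralGroup n) * r _ * (liftF n k l false)⁻¹ * (r _)⁻¹ = _
  show (sr k : DihedralGroup n) * r _ * (sr l)⁻¹ * (r _)⁻¹ = _
  rw [sr_inv, r_inv, sr_mul_r, sr_mul_sr, r_mul_r]
  congr 1
  have hcast : (q : ZMod n) = 2 * (t : ZMod n) + 1 := by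
    rw [hqt]; push_cast; ring
  rw [hcast]
  ring

lemma card_ann (n : ℕ) (h1 : 0 < n) (m : ℕ) :
    Nat.card {d : ZMod n // (m : ZMod n) * d = 0} = n.gcd m := by
  haveI : NeZero n := ⟨h1.ne'⟩
  set c : ZMod n := (m : ZMod n) with hc
  set h : ZMod n →+ ZMod n := AddMonoidHom.mulLeft c with hh
  have hker : ∀ d : ZMod n, d ∈ h.ker ↔ c * d = 0 := by
    intro d
    simp [hh, AddMonoidHom.mem_ker, AddMonoidHom.mulLeft]
  have hrange : h.range = AddSubgroup.zmultiples c := by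
    ext x
    have happ : ∀ d : ZMod n, h d = c * d := fun d => rfl
    simp only [AddMonoidHom.mem_range, AddSubgroup.mem_zmultiples_iff, happ]
    constructor
    · rintro ⟨d, rfl⟩
      obtain ⟨z, rfl⟩ := ZMod.intCast_surjective d
      exact ⟨z, by rw [zsmul_eq_mul, mul_comm]⟩
    · rintro ⟨z, rfl⟩
      exact ⟨(z : ZMod n), by rw [zsmul_eq_mul, mul_comm]⟩
  have hcard1 : Nat.card (ZMod n) = Nat.card (ZMod n ⧸ h.ker) * Nat.card h.ker :=
    AddSubgroup.card_eq_card_quotient_mul_card_addSubgroup _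
  have hcard2 : Nat.card (ZMod n ⧸ h.ker) = Nat.card h.range :=
    Nat.card_congr (QuotientAddGroup.quotientKerEquivRange h).toEquiv
  have hcard3 : Nat.card h.range = n / n.gcd m := by
    rw [hrange, Nat.card_zmultiples, hc, ZMod.addOrderOf_coe m h1.ne']
  have hzn : Nat.card (ZMod n) = n := by
    rw [Nat.card_eq_fintype_card, ZMod.card]
  have hgdvd : n.gcd m ∣ n := Nat.gcd_dvd_left n m
  have heq : n = (n / n.gcd m) * Nat.card h.ker := by
    have h2 := hcard1
    rw [hcard2, hcard3, hzn] at h2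
    exact h2
  have hsub : Nat.card {d : ZMod n // c * d = 0} = Nat.card h.ker :=
    Nat.card_congr (Equiv.subtypeEquivRight fun d => (hker d).symm)
  rw [hsub]
  have hdivpos : 0 < n / n.gcd m :=
    Nat.div_pos (Nat.le_of_dvd h1 hgdvd) (Nat.gcd_pos_of_pos_left m h1)
  have hfin : (n / n.gcd m) * Nat.card h.ker = (n / n.gcd m) * n.gcd m := by
    rw [← heq, Nat.div_mul_cancel hgdvd]
  exact Nat.eq_of_mul_eq_mul_left hdivpos hfin

end Stmt5Aux

section

open DihedralGroup Stmt5Aux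

/-- Let `n` be an odd positive integer and `p/q` a rational number in lowest terms with
`q` odd and positive (so `M(p/q)` is a knot). The number of `n`-colorings of the rational
(2-bridge) knot `M(p/q)` equals `n · gcd(n, q)`.  Here the colorings are counted, via the
classical bijection, as homomorphisms from the knot group (given by its two-bridge
presentation) to the dihedral group `D_n` sending the meridian `u` to a reflection. -/
theorem stmt5 (n : ℕ) (hn : Odd n) (h1 : 0 < n) (p q : ℤ) (hq : Odd q) (hq0 : 0 < q)
    (hcop : IsCoprime p q) :
    Nat.card {φ : PresentedGroup (bridgeRel p q) →* DihedralGroup n //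
      ∃ k : ZMod n, φ (PresentedGroup.of true) = DihedralGroup.sr k} =
      n * Int.gcd (n : ℤ) q := by
  classical
  haveI : NeZero n := ⟨h1.ne'⟩
  obtain ⟨t', hqt'⟩ := hq
  set t : ℕ := t'.toNat with htdef
  have hqt : q = 2 * t + 1 := by omega
  set relator : FreeGroup Bool :=
    FreeGroup.of true * bridgeWord p q * (FreeGroup.of false)⁻¹ * (bridgeWord p q)⁻¹
    with hreldef
  have hrelmem : relator ∈ bridgeRel p q := rfl
  have hsat : ∀ k l : ZMod n,
      (∀ w ∈ bridgeRel p q, FreeGroup.lift (liftF n k l) w = 1) ↔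
        (q : ZMod n) * (l - k) = 0 := by
    intro k l
    constructor
    · intro h
      have h' := h relator hrelmem
      rw [hreldef, lift_relator n k l p q t hqt, one_def] at h'
      exact (DihedralGroup.r.injEq _ _).mp h'
    · intro h w hw
      rcases hw with rfl
      rw [lift_relator n k l p q t hqt, h, ← one_def]
  have hB : ∀ x : {x : ZMod n × ZMod n // (q : ZMod n) * (x.2 - x.1) = 0},
      ∀ w ∈ bridgeRel p q, FreeGroup.lift (liftF n x.1.1 x.1.2) w = 1 :=
    fun x => (hsat x.1.1 x.1.2).mpr x.2
  let B : {x : ZMod n × ZMod n // (q : ZMod n) * (x.2 - x.1) = 0} →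
      {φ : PresentedGroup (bridgeRel p q) →* DihedralGroup n //
        ∃ k : ZMod n, φ (PresentedGroup.of true) = DihedralGroup.sr k} :=
    fun x => ⟨PresentedGroup.toGroup (hB x), ⟨x.1.1, by
      rw [PresentedGroup.toGroup.of]; rfl⟩⟩
  have hBbij : Function.Bijective B := by
    constructor
    · rintro ⟨⟨k₁, l₁⟩, hx₁⟩ ⟨⟨k₂, l₂⟩, hx₂⟩ hEq
      have hEq' := congrArg Subtype.val hEq
      have hu : (B ⟨(k₁, l₁), hx₁⟩).val (PresentedGroup.of true)
          = (B ⟨(k₂, l₂), hx₂⟩).val (PresentedGroup.of true) := by rw [hEq']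
      have hv : (B ⟨(k₁, l₁), hx₁⟩).val (PresentedGroup.of false)
          = (B ⟨(k₂, l₂), hx₂⟩).val (PresentedGroup.of false) := by rw [hEq']
      simp only [B, PresentedGroup.toGroup.of, liftF, if_true, if_false] at hu hv
      exact Subtype.ext (Prod.ext ((DihedralGroup.sr.injEq _ _).mp hu)
        ((DihedralGroup.sr.injEq _ _).mp hv))
    · rintro ⟨φ, ⟨k, hk⟩⟩
      set f : Bool → DihedralGroup n := fun b => φ (PresentedGroup.of b) with hf
      have hlift : ∀ w : FreeGroup Bool,
          φ (PresentedGroup.mk (bridgeRel p q) w) = FreeGroup.lift f w := by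
        intro w
        have hcomp : φ.comp (PresentedGroup.mk (bridgeRel p q)) = FreeGroup.lift f :=
          FreeGroup.ext_hom _ _ (fun b => by simp [f, PresentedGroup.of])
        exact DFunLike.congr_fun hcomp w
      have hone : PresentedGroup.mk (bridgeRel p q) relator = 1 :=
        (QuotientGroup.eq_one_iff relator).mpr (Subgroup.subset_normalClosure hrelmem)
      have hrel1 : FreeGroup.lift f relator = 1 := by
        rw [← hlift, hone, map_one]
      have hftrue : f true = sr k := hk
      have hWrefl : ∃ l : ZMod n, f false = sr l := by
        have hrw : f true * FreeGroup.lift f (bridgeWord p q) * (f false)⁻¹ *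
            (FreeGroup.lift f (bridgeWord p q))⁻¹ = 1 := by
          rw [hreldef] at hrel1
          simpa only [map_mul, map_inv, FreeGroup.lift_apply_of] using hrel1
        set W : DihedralGroup n := FreeGroup.lift f (bridgeWord p q) with hWdef
        have h2 : f true * W * (f false)⁻¹ = W := mul_inv_eq_one.mp hrw
        have h3 : f true * W = W * f false := by
          rw [mul_inv_eq_iff_eq_mul] at h2; exact h2
        have hffalse : f false = W⁻¹ * (f true * W) := by
          rw [h3, ← mul_assoc, inv_mul_cancel, one_mul]
        rcases hWc : W with j | j
        · rw [hWc] at hffalse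
          exact ⟨_, by rw [hffalse, hftrue, r_inv, sr_mul_r, r_mul_sr]⟩
        · rw [hWc] at hffalse
          exact ⟨_, by rw [hffalse, hftrue, sr_inv, sr_mul_sr, sr_mul_r]⟩
      obtain ⟨l, hl⟩ := hWrefl
      have hfeq : f = liftF n k l := by
        funext b
        cases b
        · exact hl
        · exact hftrue
      have hcond : (q : ZMod n) * (l - k) = 0 := by
        apply (hsat k l).mp
        intro w hw
        rw [← hfeq]
        rcases hw with rfl
        exact hrel1
      refine ⟨⟨(k, l), hcond⟩, ?_⟩
      apply Subtype.ext
      apply PresentedGroup.ext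
      intro b
      have hval : (B ⟨(k, l), hcond⟩).val (PresentedGroup.of b) = liftF n k l b :=
        PresentedGroup.toGroup.of (hB ⟨(k, l), hcond⟩)
      rw [hval, ← hfeq]
  rw [← Nat.card_congr (Equiv.ofBijective B hBbij)]
  -- split off the difference coordinate
  let E : {x : ZMod n × ZMod n // (q : ZMod n) * (x.2 - x.1) = 0} ≃
      ZMod n × {d : ZMod n // (q : ZMod n) * d = 0} :=
    { toFun := fun x => (x.1.1, ⟨x.1.2 - x.1.1, x.2⟩)
      invFun := fun y => ⟨(y.1, y.2.1 + y.1), by simpa using y.2.2⟩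
      left_inv := fun x => by
        apply Subtype.ext
        refine Prod.ext rfl ?_
        show x.1.2 - x.1.1 + x.1.1 = x.1.2
        abel
      right_inv := fun y => by
        refine Prod.ext rfl ?_
        apply Subtype.ext
        show y.2.1 + y.1 - y.1 = y.2.1
        abel }
  rw [Nat.card_congr E, Nat.card_prod]
  have hzn : Nat.card (ZMod n) = n := by rw [Nat.card_eq_fintype_card, ZMod.card]
  have hqcast : ((q.toNat : ℕ) : ZMod n) = (q : ZMod n) := by
    rw [← Int.cast_natCast, Int.toNat_of_nonneg hq0.le]
  have hcann : Nat.card {d : ZMod n // (q : ZMod n) * d = 0} = n.gcd q.toNat := by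
    rw [← card_ann n h1 q.toNat]
    exact Nat.card_congr (Equiv.subtypeEquivRight fun d => by rw [hqcast])
  rw [hzn, hcann]
  have : Int.gcd (n : ℤ) q = n.gcd q.toNat := by
    unfold Int.gcd
    congr 1 <;> omega
  rw [this]

end
end

section
/- Let Γ be a finite group. For x ∈ Γ with centralizer C(x) and an irreducible character ρ of C(x), define χ_{c,ρ}: {(y,g) ∈ Γ² : yg = gy} → ℂ by χ_{c,ρ}(gxg⁻¹, ghg⁻¹) = ρ(h) for h ∈ C(x) and g ∈ Γ, and χ_{c,ρ}(y,k) = 0 if y is not conjugate to x. Then χ_{c,ρ} is well-defined, is invariant under simultaneous conjugation, and the family of all such functions (over all conjugacy classes c and irreducible ρ) is orthonormal with respect to the inner product (f₁,f₂) = (1/|Γ|)·∑_{xg=gx} f₁(x,g)·conj(f₂(x,g)). -/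
open scoped Classical

open Polynomial Module

lemma trace_inv_eq_conj {U : Type} [AddCommGroup U] [Module ℂ U] [FiniteDimensional ℂ U]
    (f f' : Module.End ℂ U) (n : ℕ) (hn : n ≠ 0) (hfn : f ^ n = 1)
    (hff' : f * f' = 1) (hf'f : f' * f = 1) :
    LinearMap.trace ℂ U f' = (starRingEnd ℂ) (LinearMap.trace ℂ U f) := by
  have hsq : Squarefree (X ^ n - C (1 : ℂ)) :=
    (Polynomial.separable_X_pow_sub_C (1 : ℂ) (Nat.cast_ne_zero.mpr hn) one_ne_zero).squarefree
  have haev : aeval f (X ^ n - C (1 : ℂ)) = 0 := by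
    simp [map_sub, hfn]
  have hss : f.IsSemisimple := Module.End.isSemisimple_of_squarefree_aeval_eq_zero hsq haev
  have htop : ⨆ μ, f.eigenspace μ = ⊤ := by
    have h1 := Module.End.iSup_maxGenEigenspace_eq_top f
    simp_rw [hss.isFinitelySemisimple.maxGenEigenspace_eq_eigenspace] at h1
    exact h1
  have hInternal : DirectSum.IsInternal f.eigenspace :=
    (DirectSum.isInternal_submodule_iff_iSupIndep_and_iSup_eq_top _).mpr
      ⟨f.eigenspaces_iSupIndep, htop⟩
  have hfin : {μ : ℂ | f.eigenspace μ ≠ ⊥}.Finite := f.finite_hasEigenvalue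
  have hcomm : Commute f f' := by
    unfold Commute SemiconjBy
    rw [hff', hf'f]
  have hmapsf : ∀ μ, Set.MapsTo f (f.eigenspace μ) (f.eigenspace μ) := fun μ =>
    Module.End.mapsTo_genEigenspace_of_comm rfl μ 1
  have hmapsf' : ∀ μ, Set.MapsTo f' (f.eigenspace μ) (f.eigenspace μ) := fun μ =>
    Module.End.mapsTo_genEigenspace_of_comm hcomm μ 1
  have hμn : ∀ μ ∈ hfin.toFinset, μ ^ n = 1 := by
    intro μ hμ
    rw [Set.Finite.mem_toFinset] at hμ
    have hev : f.HasEigenvalue μ := hμ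
    have hroot := (Module.End.hasEigenvalue_iff_isRoot).mp hev
    have hdvd : minpoly ℂ f ∣ X ^ n - C (1 : ℂ) := minpoly.dvd ℂ f haev
    have : (X ^ n - C (1 : ℂ)).IsRoot μ := hroot.dvd hdvd
    simpa [sub_eq_zero] using this
  have key : ∀ μ ∈ hfin.toFinset,
      LinearMap.trace ℂ _ (f'.restrict (hmapsf' μ)) =
        (starRingEnd ℂ) (LinearMap.trace ℂ _ (f.restrict (hmapsf μ))) := by
    intro μ hμ
    have hμ1 := hμn μ hμ
    have hμ0 : μ ≠ 0 := by
      rintro rfl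
      simp [zero_pow hn] at hμ1
    have hconj : (starRingEnd ℂ) μ = μ⁻¹ := by
      have hns : Complex.normSq μ = 1 := by
        have h2 : (Complex.normSq μ : ℝ) ^ n = 1 := by
          have := congrArg Complex.normSq hμ1
          rwa [map_pow, map_one] at this
        have hnn : (0 : ℝ) ≤ Complex.normSq μ := Complex.normSq_nonneg μ
        by_contra hne
        rcases lt_or_gt_of_ne hne with hlt | hgt
        · have hh := pow_lt_one₀ hnn hlt hn
          rw [h2] at hh; exact lt_irrefl _ hh
        · have hh := one_lt_pow₀ hgt hn
          rw [h2] at hh; exact lt_irrefl _ hh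
      have : (starRingEnd ℂ) μ * μ = 1 := by
        rw [mul_comm, Complex.mul_conj, hns, Complex.ofReal_one]
      exact eq_inv_of_mul_eq_one_left this
    have hre : f.restrict (hmapsf μ) = μ • (1 : Module.End ℂ (f.eigenspace μ)) := by
      ext ⟨v, hv⟩
      have : f v = μ • v := Module.End.mem_eigenspace_iff.mp hv
      simp [LinearMap.coe_restrict_apply, this]
      exact this
    have hre' : f'.restrict (hmapsf' μ) = μ⁻¹ • (1 : Module.End ℂ (f.eigenspace μ)) := by
      ext ⟨v, hv⟩
      have h1 : f v = μ • v := Module.End.mem_eigenspace_iff.mp hv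
      have h2 : f' (f v) = v := by
        have := congrFun (congrArg (fun (g : Module.End ℂ U) => (g : U → U)) hf'f) v
        simpa using this
      rw [h1] at h2
      have h3 : μ • f' v = v := by simpa [map_smul] using h2
      have h4 : μ⁻¹ • (μ • f' v) = μ⁻¹ • v := congrArg (fun w => μ⁻¹ • w) h3
      rw [smul_smul, inv_mul_cancel₀ hμ0, one_smul] at h4
      simp [LinearMap.coe_restrict_apply, h4]
      exact h4
    rw [hre, hre', map_smul, map_smul, LinearMap.trace_one, smul_eq_mul, smul_eq_mul,
      map_mul, hconj]
    congr 1
    simp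
  rw [LinearMap.trace_eq_sum_trace_restrict' hInternal hfin hmapsf',
    LinearMap.trace_eq_sum_trace_restrict' hInternal hfin hmapsf, map_sum]
  exact Finset.sum_congr rfl key

lemma FDRep.char_inv_eq_conj {G : Type} [Group G] [Fintype G] (W : FDRep ℂ G) (g : G) :
    W.character g⁻¹ = (starRingEnd ℂ) (W.character g) := by
  apply trace_inv_eq_conj (W.ρ g) (W.ρ g⁻¹) (Fintype.card G) Fintype.card_ne_zero
  · rw [← map_pow, pow_card_eq_one, map_one]
  · rw [← map_mul, mul_inv_cancel, map_one]
  · rw [← map_mul, inv_mul_cancel, map_one]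

open CategoryTheory

section Res

variable {G H : Type} [Group G] [Group H]

/-- Restriction functor. -/
noncomputable def resFunctor (φ : G →* H) : FDRep ℂ H ⥤ FDRep ℂ G :=
  Action.res _ φ

lemma resObj_character (φ : G →* H) (W : FDRep ℂ H) (g : G) :
    ((resFunctor φ).obj W).character g = W.character (φ g) := rfl

lemma resMap_eq_zero_iff (φ : G →* H) {X Y : FDRep ℂ H} (p : X ⟶ Y) :
    (resFunctor φ).map p = 0 ↔ p = 0 := by
  constructor
  · intro h
    apply Action.hom_ext
    have h1 : ((resFunctor φ).map p).hom = p.hom := rfl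
    rw [h] at h1
    rw [← h1]
    rfl
  · rintro rfl
    apply Action.hom_ext
    rfl

/-- Restriction along a group isomorphism is an equivalence of categories. -/
noncomputable def resEquivalence (ψ : G ≃* H) : FDRep ℂ H ≌ FDRep ℂ G := by
  have h1 : ψ.toMonoidHom.comp ψ.symm.toMonoidHom
      = MonoidHom.id H := by
    ext h
    exact ψ.apply_symm_apply h
  have h2 : ψ.symm.toMonoidHom.comp ψ.toMonoidHom
      = MonoidHom.id G := by
    ext g
    exact ψ.symm_apply_apply g
  exact CategoryTheory.Equivalence.mk (resFunctor ψ.toMonoidHom) (resFunctor ψ.symm.toMonoidHom)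
    ((Action.resComp _ ψ.symm.toMonoidHom ψ.toMonoidHom
        ≪≫ eqToIso (by rw [h1]) ≪≫ Action.resId _).symm)
    (Action.resComp _ ψ.toMonoidHom ψ.symm.toMonoidHom
        ≪≫ eqToIso (by rw [h2]) ≪≫ Action.resId _)

lemma simple_res (ψ : G ≃* H) (W : FDRep ℂ H) (hW : Simple W) :
    Simple ((resFunctor ψ.toMonoidHom).obj W) := by
  haveI := hW
  set e := resEquivalence ψ with he
  have hfun : e.functor = resFunctor ψ.toMonoidHom := rfl
  constructor
  intro Y f hm
  have hm2 : Mono (e.inverse.map f) := inferInstance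
  set ι := e.unitInv.app W with hι
  haveI : IsIso ι := (e.unitIso.app W).isIso_inv
  have hmg : Mono (e.inverse.map f ≫ ι) := @mono_comp _ _ _ _ _ _ hm2 _ (IsIso.mono_of_iso ι)
  haveI : Simple ((𝟭 (FDRep ℂ H)).obj W) := hW
  have hiff := Simple.mono_isIso_iff_nonzero (Y := e.inverse.obj Y) (f := e.inverse.map f ≫ ι)
  constructor
  · intro hiso
    intro hf0
    subst hf0
    have : e.inverse.map (0 : Y ⟶ e.functor.obj W) = 0 := by
      exact (resMap_eq_zero_iff _ _).mpr rfl
    have hg0 : e.inverse.map (0 : Y ⟶ e.functor.obj W) ≫ ι = 0 := by rw [this, Limits.zero_comp]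
    have : IsIso (e.inverse.map (0 : Y ⟶ e.functor.obj W) ≫ ι) := by
      haveI : IsIso (e.inverse.map (0 : Y ⟶ e.functor.obj W)) := by
        haveI : IsIso (0 : Y ⟶ e.functor.obj W) := hiso
        exact Functor.map_isIso e.inverse _
      infer_instance
    have := hiff.mp this
    exact this hg0
  · intro hf0
    have hg0 : e.inverse.map f ≫ ι ≠ 0 := by
      intro h0
      have : e.inverse.map f = 0 := by
        have := congrArg (fun q => q ≫ e.unit.app W) h0
        have h' : e.inverse.map f ≫ ι = 0 := by simpa [Category.assoc] using this
        exact (IsIso.mono_of_iso ι).right_cancellation _ _ (h'.trans Limits.zero_comp.symm)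
      exact hf0 ((resMap_eq_zero_iff _ _).mp this)
    haveI : IsIso (e.inverse.map f ≫ ι) := hiff.mpr hg0
    haveI : IsIso (e.inverse.map f) := @IsIso.of_isIso_comp_right _ _ _ _ _ _ ι ‹IsIso ι› ‹_›
    exact isIso_of_reflects_iso f e.inverse

end Res

lemma char_orthonormal_conj {G : Type} [Group G] [Fintype G] (V W : FDRep ℂ G)
    (hV : Simple V) (hW : Simple W) :
    (1 / (Fintype.card G : ℂ)) * ∑ g : G, V.character g * (starRingEnd ℂ) (W.character g) =
      if Nonempty (V ≅ W) then 1 else 0 := by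
  letI : Fintype G := ‹Fintype G›
  letI : Invertible ((Nat.card G) : ℂ) :=
    invertibleOfNonzero (Nat.cast_ne_zero.mpr Nat.card_pos.ne')
  haveI : Simple (V : FDRep ℂ G) := hV
  haveI : Simple (W : FDRep ℂ G) := hW
  have key := FDRep.char_orthonormal (k := ℂ) (G := G) V W
  simp only [Nat.card_eq_fintype_card, Nat.cast_one, Nat.cast_zero] at key
  have hsum : ∑ g : G, V.character g * (starRingEnd ℂ) (W.character g)
      = ∑ g : G, V.character g * W.character g⁻¹ := by
    exact Finset.sum_congr rfl fun g _ => by rw [FDRep.char_inv_eq_conj]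
  rw [hsum, one_div]
  exact key


/-- `χ` is the function `χ_{c,ρ}` attached to the conjugacy class `c` of `x` and the
character `ρ` of the finite-dimensional representation `V` of the centralizer `C(x)`:
it satisfies `χ(gxg⁻¹, ghg⁻¹) = ρ(h)` for all `g ∈ Γ`, `h ∈ C(x)`, vanishes on pairs
whose first coordinate is not conjugate to `x`, and vanishes on non-commuting pairs. -/
def IsChi {Γ : Type} [Group Γ] (x : Γ)
    (V : FDRep ℂ (Subgroup.centralizer ({x} : Set Γ))) (χ : Γ → Γ → ℂ) : Prop :=
  (∀ (g : Γ) (h : Subgroup.centralizer ({x} : Set Γ)),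
    χ (g * x * g⁻¹) (g * (h : Γ) * g⁻¹) = V.character h) ∧
  (∀ y k : Γ, (¬ ∃ g : Γ, y = g * x * g⁻¹) → χ y k = 0) ∧
  (∀ y k : Γ, y * k ≠ k * y → χ y k = 0)


section Chi

variable {Γ : Type} [Group Γ]

lemma mem_cent_iff (x h : Γ) :
    h ∈ Subgroup.centralizer ({x} : Set Γ) ↔ x * h = h * x := by
  rw [Subgroup.mem_centralizer_iff]
  simp

lemma conj_mem_cent {x g k : Γ} (hc : (g * x * g⁻¹) * k = k * (g * x * g⁻¹)) :
    g⁻¹ * k * g ∈ Subgroup.centralizer ({x} : Set Γ) := by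
  rw [mem_cent_iff]
  have h1 := congrArg (fun t => g⁻¹ * t * g) hc
  simpa [mul_assoc] using h1

variable (x : Γ) (V : FDRep ℂ (Subgroup.centralizer ({x} : Set Γ)))

/-- The function `χ_{c,ρ}`. -/
noncomputable def chiFun : Γ → Γ → ℂ := fun y k =>
  if h : (∃ g : Γ, y = g * x * g⁻¹) ∧ y * k = k * y then
    V.character ⟨(Classical.choose h.1)⁻¹ * k * Classical.choose h.1, by
      have hy := Classical.choose_spec h.1
      refine conj_mem_cent (x := x) ?_
      rw [← hy]
      exact h.2⟩
  else 0

lemma isChi_eval {χ : Γ → Γ → ℂ} (hχ : IsChi x V χ) (g k : Γ)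
    (hc : (g * x * g⁻¹) * k = k * (g * x * g⁻¹)) :
    χ (g * x * g⁻¹) k = V.character ⟨g⁻¹ * k * g, conj_mem_cent hc⟩ := by
  have hk : k = g * (g⁻¹ * k * g) * g⁻¹ := by group
  conv_lhs => rw [hk]
  exact hχ.1 g ⟨g⁻¹ * k * g, conj_mem_cent hc⟩

lemma isChi_unique {χ₁ χ₂ : Γ → Γ → ℂ} (h1 : IsChi x V χ₁) (h2 : IsChi x V χ₂) : χ₁ = χ₂ := by
  funext y k
  by_cases hy : ∃ g : Γ, y = g * x * g⁻¹
  · obtain ⟨g, rfl⟩ := hy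
    by_cases hc : (g * x * g⁻¹) * k = k * (g * x * g⁻¹)
    · rw [isChi_eval x V h1 g k hc, isChi_eval x V h2 g k hc]
    · rw [h1.2.2 _ _ hc, h2.2.2 _ _ hc]
  · rw [h1.2.1 _ _ hy, h2.2.1 _ _ hy]

lemma isChi_chiFun : IsChi x V (chiFun x V) := by
  refine ⟨?_, ?_, ?_⟩
  · intro g h
    have hxh : x * (h : Γ) = (h : Γ) * x := (mem_cent_iff x (h : Γ)).mp h.2
    have hcond : (∃ g' : Γ, g * x * g⁻¹ = g' * x * g'⁻¹) ∧
        (g * x * g⁻¹) * (g * (h : Γ) * g⁻¹) = (g * (h : Γ) * g⁻¹) * (g * x * g⁻¹) := by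
      refine ⟨⟨g, rfl⟩, ?_⟩
      have := congrArg (fun t => g * t * g⁻¹) hxh
      simpa [mul_assoc] using this
    rw [chiFun, dif_pos hcond]
    set g₀ := Classical.choose hcond.1 with hg₀
    have hspec : g * x * g⁻¹ = g₀ * x * g₀⁻¹ := Classical.choose_spec hcond.1
    have ha : g₀⁻¹ * g ∈ Subgroup.centralizer ({x} : Set Γ) := by
      rw [mem_cent_iff]
      have h1 := congrArg (fun t => g₀⁻¹ * t * g) hspec.symm
      simpa [mul_assoc] using h1
    have hel : (⟨g₀⁻¹ * (g * (h : Γ) * g⁻¹) * g₀, by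
        have hy := Classical.choose_spec hcond.1
        refine conj_mem_cent (x := x) ?_
        rw [← hy]; exact hcond.2⟩ :
          Subgroup.centralizer ({x} : Set Γ)) =
        ⟨g₀⁻¹ * g, ha⟩ * h * (⟨g₀⁻¹ * g, ha⟩)⁻¹ := by
      apply Subtype.ext
      push_cast
      group
    rw [hel, FDRep.char_conj]
  · intro y k hy
    rw [chiFun, dif_neg]
    intro hcond
    exact hy hcond.1
  · intro y k hc
    rw [chiFun, dif_neg]
    intro hcond
    exact hc hcond.2

lemma isChi_conj_invariant {χ : Γ → Γ → ℂ} (hχ : IsChi x V χ) (a y k : Γ) :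
    χ (a * y * a⁻¹) (a * k * a⁻¹) = χ y k := by
  by_cases hy : ∃ g : Γ, y = g * x * g⁻¹
  · obtain ⟨g, rfl⟩ := hy
    by_cases hc : (g * x * g⁻¹) * k = k * (g * x * g⁻¹)
    · have e1 : a * (g * x * g⁻¹) * a⁻¹ = (a * g) * x * (a * g)⁻¹ := by group
      have hc2 : ((a * g) * x * (a * g)⁻¹) * (a * k * a⁻¹)
          = (a * k * a⁻¹) * ((a * g) * x * (a * g)⁻¹) := by
        rw [← e1]
        have := congrArg (fun t => a * t * a⁻¹) hc
        simpa [mul_assoc] using this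
      rw [e1, isChi_eval x V hχ (a * g) (a * k * a⁻¹) hc2, isChi_eval x V hχ g k hc]
      congr 1
      apply Subtype.ext
      show (a * g)⁻¹ * (a * k * a⁻¹) * (a * g) = g⁻¹ * k * g
      group
    · have hc2 : ¬ ((a * (g * x * g⁻¹) * a⁻¹) * (a * k * a⁻¹)
          = (a * k * a⁻¹) * (a * (g * x * g⁻¹) * a⁻¹)) := by
        intro h
        apply hc
        have := congrArg (fun t => a⁻¹ * t * a) h
        simpa [mul_assoc] using this
      rw [hχ.2.2 _ _ hc2, hχ.2.2 _ _ hc]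
  · have hy2 : ¬ ∃ g : Γ, a * y * a⁻¹ = g * x * g⁻¹ := by
      rintro ⟨g, hg⟩
      refine hy ⟨a⁻¹ * g, ?_⟩
      have h2 : y = a⁻¹ * (a * y * a⁻¹) * a := by group
      rw [h2, hg]
      group
    rw [hχ.2.1 _ _ hy2, hχ.2.1 _ _ hy]

end Chi

section Sums

variable {Γ : Type} [Group Γ] [Fintype Γ]

lemma cent_of_conj_eq {x g g₀ : Γ} (h : g * x * g⁻¹ = g₀ * x * g₀⁻¹) :
    g₀⁻¹ * g ∈ Subgroup.centralizer ({x} : Set Γ) := by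
  rw [mem_cent_iff]
  have h1 := congrArg (fun t => g₀⁻¹ * t * g) h.symm
  simpa [mul_assoc] using h1

lemma chiSum_inner (x g : Γ) (F : Γ → ℂ)
    (hF : ∀ k, ¬ ((g * x * g⁻¹) * k = k * (g * x * g⁻¹)) → F k = 0) :
    ∑ k : Γ, F k = ∑ h : Subgroup.centralizer ({x} : Set Γ), F (g * (h : Γ) * g⁻¹) := by
  classical
  have hinj : ∀ a ∈ Finset.univ, ∀ b ∈ Finset.univ,
      (fun h : Subgroup.centralizer ({x} : Set Γ) => g * (h : Γ) * g⁻¹) a =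
      (fun h : Subgroup.centralizer ({x} : Set Γ) => g * (h : Γ) * g⁻¹) b → a = b := by
    intro a _ b _ hab
    apply Subtype.ext
    simpa using mul_left_cancel (mul_right_cancel hab)
  rw [← Finset.sum_image hinj]
  apply (Finset.sum_subset (Finset.subset_univ _) _).symm
  intro k _ hk
  apply hF
  intro hc
  apply hk
  rw [Finset.mem_image]
  refine ⟨⟨g⁻¹ * k * g, conj_mem_cent hc⟩, Finset.mem_univ _, ?_⟩
  show g * (g⁻¹ * k * g) * g⁻¹ = k
  group

lemma chiCard_fiber (x g₀ : Γ) :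
    (Finset.univ.filter fun g : Γ => g * x * g⁻¹ = g₀ * x * g₀⁻¹).card =
      Fintype.card (Subgroup.centralizer ({x} : Set Γ)) := by
  classical
  rw [Fintype.card, eq_comm]
  refine Finset.card_bij' (fun c _ => g₀ * (c : Γ))
    (fun g hg => ⟨g₀⁻¹ * g, cent_of_conj_eq (Finset.mem_filter.mp hg).2⟩) ?_ ?_ ?_ ?_
  · intro c _
    rw [Finset.mem_filter]
    refine ⟨Finset.mem_univ _, ?_⟩
    have hcx : x * (c : Γ) = (c : Γ) * x := (mem_cent_iff x (c : Γ)).mp c.2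
    have e1 : (g₀ * (c : Γ)) * x * (g₀ * (c : Γ))⁻¹ = g₀ * ((c : Γ) * x * (c : Γ)⁻¹) * g₀⁻¹ := by
      group
    have e2 : (c : Γ) * x * (c : Γ)⁻¹ = x := by
      rw [← hcx]
      group
    rw [e1, e2]
  · intro g _
    exact Finset.mem_univ _
  · intro c _
    apply Subtype.ext
    show g₀⁻¹ * (g₀ * (c : Γ)) = (c : Γ)
    group
  · intro g _
    show g₀ * (g₀⁻¹ * g) = g
    group

lemma chiSum_outer (x : Γ) (A : Γ → ℂ)
    (hA : ∀ y, (¬ ∃ g : Γ, y = g * x * g⁻¹) → A y = 0) :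
    ∑ g : Γ, A (g * x * g⁻¹) =
      (Fintype.card (Subgroup.centralizer ({x} : Set Γ)) : ℂ) * ∑ y : Γ, A y := by
  classical
  rw [← Finset.sum_fiberwise' Finset.univ (fun g : Γ => g * x * g⁻¹) A]
  rw [Finset.mul_sum]
  apply Finset.sum_congr rfl
  intro j _
  rw [Finset.sum_const]
  by_cases hj : ∃ g : Γ, j = g * x * g⁻¹
  · obtain ⟨g₀, rfl⟩ := hj
    rw [chiCard_fiber x g₀]
    simp [nsmul_eq_mul]
  · rw [hA j hj]
    simp

end Sums

/-- For a finite group `Γ`, an element `x` with centralizer `C(x)` and an irreducible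
character `ρ` (of a simple representation `V`) of `C(x)`, the function `χ_{c,ρ}` with
`χ_{c,ρ}(gxg⁻¹, ghg⁻¹) = ρ(h)` and `χ_{c,ρ}(y,k) = 0` for `y` not conjugate to `x` is
well-defined (exists and is unique), is invariant under simultaneous conjugation, and the
family of all such functions is orthonormal with respect to
`(f₁,f₂) = (1/|Γ|)·∑_{xg=gx} f₁(x,g)·conj(f₂(x,g))`. -/
theorem stmt8 (Γ : Type) [Group Γ] [Fintype Γ] (x : Γ)
    (V : FDRep ℂ (Subgroup.centralizer ({x} : Set Γ))) (hV : CategoryTheory.Simple V) :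
    (∃! χ : Γ → Γ → ℂ, IsChi x V χ) ∧
    (∀ χ : Γ → Γ → ℂ, IsChi x V χ →
      ∀ a y k : Γ, χ (a * y * a⁻¹) (a * k * a⁻¹) = χ y k) ∧
    (∀ (x' : Γ) (V' : FDRep ℂ (Subgroup.centralizer ({x'} : Set Γ))),
      CategoryTheory.Simple V' →
      ∀ χ χ' : Γ → Γ → ℂ, IsChi x V χ → IsChi x' V' χ' →
        (1 / (Fintype.card Γ : ℂ)) *
            ∑ y : Γ, ∑ k : Γ, χ y k * (starRingEnd ℂ) (χ' y k) =
          if χ = χ' then 1 else 0) := by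
  refine ⟨⟨chiFun x V, isChi_chiFun x V, fun χ hχ => isChi_unique x V hχ (isChi_chiFun x V)⟩,
    fun χ hχ a y k => isChi_conj_invariant x V hχ a y k, ?_⟩
  intro x' V' hV' χ χ' hχ hχ'
  by_cases hconj : ∃ b : Γ, x' = b * x * b⁻¹
  case neg =>
    have hnc : ¬ ∃ u : Γ, x = u * x' * u⁻¹ := by
      rintro ⟨u, hu⟩
      exact hconj ⟨u⁻¹, by rw [hu]; group⟩
    have hzero : ∀ y k : Γ, χ y k * (starRingEnd ℂ) (χ' y k) = 0 := by
      intro y k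
      by_cases hy : ∃ g : Γ, y = g * x * g⁻¹
      · have hy' : ¬ ∃ u : Γ, y = u * x' * u⁻¹ := by
          rintro ⟨u, hu⟩
          obtain ⟨g, hg⟩ := hy
          refine hnc ⟨g⁻¹ * u, ?_⟩
          have hxy : x = g⁻¹ * y * g := by rw [hg]; group
          rw [hxy, hu]
          group
        rw [hχ'.2.1 y k hy', map_zero, mul_zero]
      · rw [hχ.2.1 y k hy, zero_mul]
    have hne : χ ≠ χ' := by
      intro heq
      have h1 : χ x 1 = V.character 1 := by
        have := hχ.1 1 1
        simpa using this
      have h2 : χ' x 1 = 0 := hχ'.2.1 x 1 hnc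
      have hfr : ((Module.finrank ℂ V : ℂ)) ≠ 0 := by
        rw [Nat.cast_ne_zero]
        intro h0
        haveI : Subsingleton V := Module.finrank_zero_iff.mp h0
        apply CategoryTheory.id_nonzero V
        apply Action.hom_ext
        apply FGModuleCat.hom_ext
        apply LinearMap.ext
        intro v
        haveI hss : Subsingleton ↑V.V.obj := ‹Subsingleton V›
        exact Subsingleton.elim _ _
      rw [heq, h2] at h1
      rw [FDRep.char_one] at h1
      exact hfr h1.symm
    rw [if_neg hne]
    have hs : ∑ y : Γ, ∑ k : Γ, χ y k * (starRingEnd ℂ) (χ' y k) = 0 :=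
      Finset.sum_eq_zero fun y _ => Finset.sum_eq_zero fun k _ => hzero y k
    rw [hs, mul_zero]
  case pos =>
  obtain ⟨b, hb⟩ := hconj
  have hmem1 : ∀ h : Γ, h ∈ Subgroup.centralizer ({x} : Set Γ) →
      b * h * b⁻¹ ∈ Subgroup.centralizer ({x'} : Set Γ) := by
    intro h hh
    rw [mem_cent_iff] at hh ⊢
    rw [hb]
    calc b * x * b⁻¹ * (b * h * b⁻¹) = b * (x * h) * b⁻¹ := by group
    _ = b * (h * x) * b⁻¹ := by rw [hh]
    _ = b * h * b⁻¹ * (b * x * b⁻¹) := by group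
  have hmem2 : ∀ h : Γ, h ∈ Subgroup.centralizer ({x'} : Set Γ) →
      b⁻¹ * h * b ∈ Subgroup.centralizer ({x} : Set Γ) := by
    intro h hh
    rw [mem_cent_iff] at hh ⊢
    have hx : x = b⁻¹ * x' * b := by rw [hb]; group
    rw [hx]
    calc b⁻¹ * x' * b * (b⁻¹ * h * b) = b⁻¹ * (x' * h) * b := by group
    _ = b⁻¹ * (h * x') * b := by rw [hh]
    _ = b⁻¹ * h * b * (b⁻¹ * x' * b) := by group
  let ψ : (Subgroup.centralizer ({x} : Set Γ)) ≃* (Subgroup.centralizer ({x'} : Set Γ)) :=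
    { toFun := fun h => ⟨b * h * b⁻¹, hmem1 h h.2⟩
      invFun := fun h => ⟨b⁻¹ * h * b, hmem2 h h.2⟩
      left_inv := fun h => Subtype.ext (by show b⁻¹ * (b * h * b⁻¹) * b = h; group)
      right_inv := fun h => Subtype.ext (by show b * (b⁻¹ * h * b) * b⁻¹ = h; group)
      map_mul' := fun h₁ h₂ => Subtype.ext (by push_cast; group) }
  set V'' := (resFunctor ψ.toMonoidHom).obj V' with hV''def
  have hV''simple : CategoryTheory.Simple V'' := simple_res ψ V' hV'
  have hkey : ∀ (g : Γ) (h : Subgroup.centralizer ({x} : Set Γ)),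
      χ' (g * x * g⁻¹) (g * (h : Γ) * g⁻¹) = V''.character h := by
    intro g h
    have hxh : x * (h : Γ) = (h : Γ) * x := (mem_cent_iff x _).mp h.2
    have e1 : g * x * g⁻¹ = (g * b⁻¹) * x' * (g * b⁻¹)⁻¹ := by rw [hb]; group
    have hc : ((g * b⁻¹) * x' * (g * b⁻¹)⁻¹) * (g * (h : Γ) * g⁻¹)
        = (g * (h : Γ) * g⁻¹) * ((g * b⁻¹) * x' * (g * b⁻¹)⁻¹) := by
      rw [← e1]
      have := congrArg (fun t => g * t * g⁻¹) hxh
      simpa [mul_assoc] using this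
    rw [e1, isChi_eval x' V' hχ' (g * b⁻¹) _ hc]
    have h2 : V''.character h = V'.character (ψ.toMonoidHom h) := resObj_character _ _ _
    rw [h2]
    congr 1
    apply Subtype.ext
    show (g * b⁻¹)⁻¹ * (g * (h : Γ) * g⁻¹) * (g * b⁻¹) = b * (h : Γ) * b⁻¹
    group
  have hcardC : ((Fintype.card (Subgroup.centralizer ({x} : Set Γ)) : ℂ)) ≠ 0 := Nat.cast_ne_zero.mpr Fintype.card_ne_zero
  have hcardG : ((Fintype.card Γ : ℂ)) ≠ 0 := Nat.cast_ne_zero.mpr Fintype.card_ne_zero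
  set A : Γ → ℂ := fun y => ∑ k : Γ, χ y k * (starRingEnd ℂ) (χ' y k) with hA
  have hAconj : ∀ g : Γ, A (g * x * g⁻¹)
      = ∑ h : Subgroup.centralizer ({x} : Set Γ), V.character h * (starRingEnd ℂ) (V''.character h) := by
    intro g
    have hstep : A (g * x * g⁻¹)
        = ∑ k : Γ, χ (g * x * g⁻¹) k * (starRingEnd ℂ) (χ' (g * x * g⁻¹) k) := rfl
    rw [hstep, chiSum_inner x g
      (fun k => χ (g * x * g⁻¹) k * (starRingEnd ℂ) (χ' (g * x * g⁻¹) k))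
      (fun k hk => by
        show χ (g * x * g⁻¹) k * (starRingEnd ℂ) (χ' (g * x * g⁻¹) k) = 0
        rw [hχ.2.2 _ _ hk, zero_mul])]
    apply Finset.sum_congr rfl
    intro h _
    show χ (g * x * g⁻¹) (g * (h : Γ) * g⁻¹) * (starRingEnd ℂ) (χ' (g * x * g⁻¹) (g * (h : Γ) * g⁻¹))
      = V.character h * (starRingEnd ℂ) (V''.character h)
    rw [hχ.1 g h, hkey g h]
  have hA0 : ∀ y, (¬ ∃ g : Γ, y = g * x * g⁻¹) → A y = 0 := by
    intro y hy
    exact Finset.sum_eq_zero fun k _ => by rw [hχ.2.1 y k hy, zero_mul]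
  have houter := chiSum_outer x A hA0
  have hconst : ∑ g : Γ, A (g * x * g⁻¹)
      = (Fintype.card Γ : ℂ) * ∑ h : Subgroup.centralizer ({x} : Set Γ), V.character h * (starRingEnd ℂ) (V''.character h) := by
    rw [Finset.sum_congr rfl fun g _ => hAconj g, Finset.sum_const, Finset.card_univ,
      nsmul_eq_mul]
  have hmain : (1 / (Fintype.card Γ : ℂ)) * ∑ y : Γ, A y
      = (1 / (Fintype.card (Subgroup.centralizer ({x} : Set Γ)) : ℂ)) *
          ∑ h : Subgroup.centralizer ({x} : Set Γ), V.character h * (starRingEnd ℂ) (V''.character h) := by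
    rw [hconst] at houter
    field_simp
    linear_combination - houter
  have hgoal : (∑ y : Γ, ∑ k : Γ, χ y k * (starRingEnd ℂ) (χ' y k)) = ∑ y : Γ, A y := rfl
  rw [hgoal, hmain]
  by_cases hcc : χ = χ'
  · rw [if_pos hcc]
    have hchar : ∀ h : Subgroup.centralizer ({x} : Set Γ), V''.character h = V.character h := by
      intro h
      have e1 := hkey 1 h
      have e2 := hχ.1 1 h
      simp only [one_mul, inv_one, mul_one] at e1 e2
      rw [← e1, ← e2, hcc]
    rw [Finset.sum_congr rfl fun h _ => by rw [hchar h]]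
    rw [char_orthonormal_conj V V hV hV, if_pos ⟨CategoryTheory.Iso.refl V⟩]
  · rw [if_neg hcc, char_orthonormal_conj V V'' hV hV''simple, if_neg]
    rintro ⟨iso⟩
    apply hcc
    have hchar := FDRep.char_iso iso
    have hIsChi' : IsChi x V χ' := by
      refine ⟨fun g h => ?_, fun y k hy => ?_, hχ'.2.2⟩
      · rw [hkey g h]
        exact (congrFun hchar h).symm
      · apply hχ'.2.1
        rintro ⟨u, hu⟩
        refine hy ⟨u * b, ?_⟩
        rw [hu, hb]
        group
    exact isChi_unique x V hχ hIsChi'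
end

section
/- Let Γ be a finite group and let E be the space of conjugation-invariant functions on commuting pairs of Γ. Define the action of SL(2,ℤ) on E by (M·f)(x,g) = f(x^a g^b, x^c g^d) for M = [[a,b],[c,d]], restricted to commuting pairs (x,g). Then for Q = [[1,0],[1,1]], each basis function χ_{c,ρ} is an eigenvector of Q with eigenvalue θ_{c,ρ} = χ_{c,ρ}(x,x)/χ_{c,ρ}(x,e) = ρ(x)/ρ(e) for any x ∈ c, where ρ(x) is a scalar since x is central in C(x). -/
open CategoryTheory in
lemma schur_char {Γ : Type} [Group Γ] (x : Γ)
    (V : FDRep ℂ (Subgroup.centralizer ({x} : Set Γ))) (hV : CategoryTheory.Simple V)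
    (hx : x ∈ Subgroup.centralizer ({x} : Set Γ)) :
    ∀ h : Subgroup.centralizer ({x} : Set Γ),
      V.character (⟨x, hx⟩ * h) =
        (V.character ⟨x, hx⟩ / V.character 1) * V.character h := by
  set xc : Subgroup.centralizer ({x} : Set Γ) := ⟨x, hx⟩ with hxcdef
  have hxc : ∀ h : Subgroup.centralizer ({x} : Set Γ), xc * h = h * xc := by
    rintro ⟨h, hh⟩
    have := hh x rfl
    ext
    simpa using this
  have : ∃ f : V ⟶ V, f.hom.hom.hom = V.ρ xc := by
    refine ⟨⟨⟨ModuleCat.ofHom (V.ρ xc)⟩, fun g => ?_⟩, rfl⟩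
    apply FGModuleCat.hom_ext
    show (V.ρ xc).comp (V.ρ g) = (V.ρ g).comp (V.ρ xc)
    rw [← Module.End.mul_eq_comp, ← Module.End.mul_eq_comp, ← map_mul, ← map_mul, hxc]
  obtain ⟨f, hf⟩ := this
  obtain ⟨c, hc⟩ := CategoryTheory.endomorphism_simple_eq_smul_id ℂ f
  have hρ : V.ρ xc = c • LinearMap.id := by
    rw [← hf, ← hc]; rfl
  have hd : (Module.finrank ℂ V : ℂ) ≠ 0 := by
    have hpos : 0 < Module.finrank ℂ V := by
      by_contra hz
      have h0 : Module.finrank ℂ V = 0 := by omega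
      have hs : Subsingleton V := (Module.finrank_zero_iff (R := ℂ) (M := V)).mp h0
      apply CategoryTheory.id_nonzero V
      letI : Subsingleton ((CategoryTheory.forget (FGModuleCat ℂ)).obj V.V) := hs
      ext v
      exact Subsingleton.elim _ _
    exact_mod_cast hpos.ne'
  have key : ∀ k : Subgroup.centralizer ({x} : Set Γ), V.character (xc * k) = c * V.character k := by
    intro k
    simp only [FDRep.character, map_mul, hρ]
    have : (c • (LinearMap.id : V →ₗ[ℂ] V)) * V.ρ k = c • V.ρ k := by
      rw [smul_mul_assoc, Module.End.mul_eq_comp, LinearMap.id_comp]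
    rw [this, map_smul]
    rfl
  intro h
  have hxx : V.character xc = c * Module.finrank ℂ V := by
    have := key 1
    simpa using this
  rw [key h, hxx, FDRep.char_one]
  congr 1
  field_simp

/-- Under the `SL(2,ℤ)`-action `(M·f)(x,g) = f(x^a g^b, x^c g^d)` on the space `E` of
conjugation-invariant functions on commuting pairs, the matrix `Q = [[1,0],[1,1]]` acts by
`(Q·f)(y,g) = f(y, y·g)`; each basis function `χ_{c,ρ}` is an eigenvector of `Q` with
eigenvalue `θ_{c,ρ} = χ_{c,ρ}(x,x)/χ_{c,ρ}(x,e)` (which equals `ρ(x)/ρ(e)`, a scalar by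
Schur's lemma since `x` is central in `C(x)`), for any representative `x` of `c`. -/
theorem stmt12 (Γ : Type) [Group Γ] [Fintype Γ] (x : Γ)
    (V : FDRep ℂ (Subgroup.centralizer ({x} : Set Γ))) (hV : CategoryTheory.Simple V)
    (χ : Γ → Γ → ℂ) (h : IsChi x V χ) :
    ∀ y g : Γ, y * g = g * y → χ y (y * g) = (χ x x / χ x 1) * χ y g := by
  intro y g hyg
  obtain ⟨h1, h2, h3⟩ := h
  by_cases hconj : ∃ a : Γ, y = a * x * a⁻¹
  · obtain ⟨a, rfl⟩ := hconj
    have hx : x ∈ Subgroup.centralizer ({x} : Set Γ) :=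
      Subgroup.mem_centralizer_iff.2 (by simp)
    set xc : Subgroup.centralizer ({x} : Set Γ) := ⟨x, hx⟩
    have hgc : a⁻¹ * g * a ∈ Subgroup.centralizer ({x} : Set Γ) := by
      refine Subgroup.mem_centralizer_iff.2 ?_
      rintro z rfl
      have : a * z * a⁻¹ * g = g * (a * z * a⁻¹) := hyg
      calc z * (a⁻¹ * g * a) = a⁻¹ * (a * z * a⁻¹ * g) * a := by group
        _ = a⁻¹ * (g * (a * z * a⁻¹)) * a := by rw [this]
        _ = a⁻¹ * g * a * z := by group
    set hc : Subgroup.centralizer ({x} : Set Γ) := ⟨a⁻¹ * g * a, hgc⟩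
    have hg : g = a * (hc : Γ) * a⁻¹ := by simp [hc]; group
    have e1 : χ (a * x * a⁻¹) g = V.character hc := by
      rw [hg]; exact h1 a hc
    have e2 : χ (a * x * a⁻¹) (a * x * a⁻¹ * g) = V.character (xc * hc) := by
      have : a * x * a⁻¹ * g = a * ((xc * hc : Subgroup.centralizer ({x} : Set Γ)) : Γ) * a⁻¹ := by
        rw [hg]; push_cast; group; rfl
      rw [this]; exact h1 a (xc * hc)
    have e3 : χ x x = V.character xc := by
      have := h1 1 xc
      simpa using this
    have e4 : χ x 1 = V.character 1 := by
      have := h1 1 1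
      simpa using this
    rw [e1, e2, e3, e4]
    exact schur_char x V hV hx hc
  · rw [h2 _ _ hconj, h2 _ _ hconj, mul_zero]
end
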